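/- Let σ : X → Y be a surjective continuous map and suppose Y = ⊔ᵢ Wᵢ is a partition into open sets such that for each i, σ⁻¹(Wᵢ) = ⊔_{j ∈ Jᵢ} Uⱼ⁽ⁱ⁾ is a partition into open sets with each σ|_{Uⱼ⁽ⁱ⁾} : Uⱼ⁽ⁱ⁾ → Wᵢ a homeomorphism. Then the map ρ : R(σ) → ⊔ᵢ (Wᵢ × Jᵢ × Jᵢ) sending (u, v) to (σ(u), j, k), where u ∈ Uⱼ⁽ⁱ⁾ and v ∈ Uₖ⁽ⁱ⁾, is a well-defined homeomorphism, where R(σ) = {(u,v) ∈ X × X : σ(u) = σ(v)} has the subspace topology from X × X and the codomain has the disjoint-union/product topology. -/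

import Mathlib

/-- Let `σ : X → Y` be a continuous surjection, `Y = ⊔ᵢ Wᵢ` a partition
into open sets, and for each `i` let `σ ⁻¹' Wᵢ = ⊔_{j ∈ Jᵢ} Uⱼ⁽ⁱ⁾` be a partition into
open sets with each `σ` restricting to a homeomorphism `Uⱼ⁽ⁱ⁾ ≃ₜ Wᵢ` (the `Jᵢ` countable
and discrete). Then the map `ρ : R(σ) → ⊔ᵢ (Wᵢ × Jᵢ × Jᵢ)`, `(u,v) ↦ (σ u, j, k)` for
`u ∈ Uⱼ⁽ⁱ⁾`, `v ∈ Uₖ⁽ⁱ⁾`, is a well-defined homeomorphism, where `R(σ)` carries the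
subspace topology of `X × X` and the codomain the disjoint-union/product topology. -/
theorem kernel_pair_homeomorph_of_partition
    {X Y : Type*} [TopologicalSpace X] [TopologicalSpace Y]
    {ι : Type*} [Countable ι]
    (J : ι → Type*) [∀ i, Countable (J i)] [∀ i, TopologicalSpace (J i)]
    [∀ i, DiscreteTopology (J i)]
    (σ : X → Y) (hcont : Continuous σ) (hsurj : Function.Surjective σ)
    (W : ι → Set Y) (hWo : ∀ i, IsOpen (W i))
    (hWdisj : Pairwise (Function.onFun Disjoint W)) (hWcover : (⋃ i, W i) = Set.univ)
    (U : ∀ i, J i → Set X) (hUo : ∀ i j, IsOpen (U i j))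
    (hUdisj : ∀ (i i' : ι) (j : J i) (j' : J i'),
      (⟨i, j⟩ : Σ i, J i) ≠ ⟨i', j'⟩ → Disjoint (U i j) (U i' j'))
    (hUcover : ∀ i, (⋃ j, U i j) = σ ⁻¹' (W i))
    (hhomeo : ∀ i j, ∃ e : (U i j) ≃ₜ (W i), ∀ x : U i j, (e x : Y) = σ x) :
    ∃ ρ : {p : X × X // σ p.1 = σ p.2} ≃ₜ (Σ i, (W i) × J i × J i),
      ∀ (p : X × X) (hp : σ p.1 = σ p.2) (i : ι) (j k : J i),
        p.1 ∈ U i j → p.2 ∈ U i k →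
        ∃ h : σ p.1 ∈ W i, ρ ⟨p, hp⟩ = ⟨i, (⟨σ p.1, h⟩, j, k)⟩ := by

  classical
  choose e he using hhomeo
  have hsy : ∀ (i : ι) (j : J i) (w : W i), σ (((e i j).symm w : X)) = (w : Y) := by
    intro i j w
    rw [← he i j ((e i j).symm w), Homeomorph.apply_symm_apply]
  -- existence of indices
  have hex : ∀ p : {p : X × X // σ p.1 = σ p.2},
      ∃ q : Σ i, (W i) × J i × J i,
        ((q.2.1 : Y) = σ p.1.1) ∧ p.1.1 ∈ U q.1 q.2.2.1 ∧ p.1.2 ∈ U q.1 q.2.2.2 := by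
    rintro ⟨⟨u, v⟩, hp⟩
    have hu : σ u ∈ ⋃ i, W i := by rw [hWcover]; trivial
    obtain ⟨i, hi⟩ := Set.mem_iUnion.mp hu
    have hu' : u ∈ ⋃ j, U i j := by rw [hUcover]; exact hi
    obtain ⟨j, hj⟩ := Set.mem_iUnion.mp hu'
    have hv' : v ∈ ⋃ j, U i j := by
      rw [hUcover]
      show σ v ∈ W i
      rw [← hp]; exact hi
    obtain ⟨k, hk⟩ := Set.mem_iUnion.mp hv'
    exact ⟨⟨i, ⟨σ u, hi⟩, j, k⟩, rfl, hj, hk⟩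
  choose f hf1 hf2 hf3 using hex
  -- uniqueness
  have huniq : ∀ {x : X} {i i' : ι} {j : J i} {j' : J i'},
      x ∈ U i j → x ∈ U i' j' → (⟨i, j⟩ : Σ i, J i) = ⟨i', j'⟩ := by
    intro x i i' j j' h h'
    by_contra hne
    exact Set.disjoint_left.mp (hUdisj i i' j j' hne) h h'
  have hfval : ∀ (p : {p : X × X // σ p.1 = σ p.2}) (i : ι) (j k : J i)
      (h1 : p.1.1 ∈ U i j) (h2 : p.1.2 ∈ U i k) (hw : σ p.1.1 ∈ W i),
      f p = ⟨i, ⟨σ p.1.1, hw⟩, j, k⟩ := by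
    intro p i j k h1 h2 hw
    obtain ⟨hi1, hj1⟩ := Sigma.mk.inj_iff.mp (huniq (hf2 p) h1)
    subst hi1
    obtain rfl := eq_of_heq hj1
    obtain ⟨_, hk1⟩ := Sigma.mk.inj_iff.mp (huniq (hf3 p) h2)
    obtain rfl := eq_of_heq hk1
    have hwv : (f p).2.1 = (⟨σ p.1.1, hw⟩ : W (f p).1) := Subtype.ext (hf1 p)
    rw [← hwv]
  -- the inverse map
  set g : (Σ i, (W i) × J i × J i) → {p : X × X // σ p.1 = σ p.2} :=
    fun q => ⟨(((e q.1 q.2.2.1).symm q.2.1 : X), ((e q.1 q.2.2.2).symm q.2.1 : X)),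
      by rw [hsy, hsy]⟩ with hg
  have hgf : ∀ p, g (f p) = p := by
    intro p
    apply Subtype.ext
    have e1' : (f p).2.1 = e (f p).1 (f p).2.2.1 ⟨p.1.1, hf2 p⟩ :=
      Subtype.ext (by rw [he]; exact hf1 p)
    have e1 := congrArg (e (f p).1 (f p).2.2.1).symm e1'
    rw [Homeomorph.symm_apply_apply] at e1
    have e2' : (f p).2.1 = e (f p).1 (f p).2.2.2 ⟨p.1.2, hf3 p⟩ :=
      Subtype.ext (by rw [he]; exact (hf1 p).trans p.2)
    have e2 := congrArg (e (f p).1 (f p).2.2.2).symm e2'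
    rw [Homeomorph.symm_apply_apply] at e2
    show ((((e (f p).1 (f p).2.2.1).symm (f p).2.1 : X),
        ((e (f p).1 (f p).2.2.2).symm (f p).2.1 : X)) : X × X) = p.1
    rw [e1, e2]
  have hfg : ∀ q, f (g q) = q := by
    rintro ⟨i, w, j, k⟩
    have hw : σ ((g ⟨i, w, j, k⟩).1.1) ∈ W i := by
      show σ (((e i j).symm w : X)) ∈ W i
      rw [hsy]; exact w.2
    rw [hfval (g ⟨i, w, j, k⟩) i j k ((e i j).symm w).2 ((e i k).symm w).2 hw]
    have hw' : (⟨σ ((g ⟨i, w, j, k⟩).1.1), hw⟩ : W i) = w := Subtype.ext (hsy i j w)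
    rw [hw']
  -- continuity of g
  have hgc : Continuous g := by
    apply continuous_sigma
    intro i
    rw [continuous_iff_continuousAt]
    rintro ⟨w, j, k⟩
    have hc : ContinuousAt (fun x : (W i) × J i × J i =>
        (⟨(((e i j).symm x.1 : X), ((e i k).symm x.1 : X)), by rw [hsy, hsy]⟩ :
          {p : X × X // σ p.1 = σ p.2})) (w, j, k) := by
      apply Continuous.continuousAt
      apply Continuous.subtype_mk
      exact (continuous_subtype_val.comp ((e i j).symm.continuous.comp continuous_fst)).prodMk
        (continuous_subtype_val.comp ((e i k).symm.continuous.comp continuous_fst))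
    apply hc.congr
    have hev : ∀ᶠ x : (W i) × J i × J i in nhds (w, j, k), x.2 = (j, k) := by
      exact IsOpen.mem_nhds ((isOpen_discrete {(j, k)}).preimage continuous_snd) rfl
    refine hev.mono fun x hx => ?_
    show _ = g ⟨i, x⟩
    have hx' : x = (x.1, j, k) := by
      rw [← hx]
    rw [hx']
  -- continuity of f
  have hfc : Continuous f := by
    rw [continuous_iff_continuousAt]
    intro p
    set i := (f p).1 with hi
    set S : Set {p : X × X // σ p.1 = σ p.2} :=
      {q | q.1.1 ∈ U i (f p).2.2.1 ∧ q.1.2 ∈ U i (f p).2.2.2} with hS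
    have hSo : IsOpen S :=
      ((hUo i (f p).2.2.1).preimage (continuous_fst.comp continuous_subtype_val)).inter
      ((hUo i (f p).2.2.2).preimage (continuous_snd.comp continuous_subtype_val))
    have hSp : p ∈ S := ⟨hf2 p, hf3 p⟩
    have hwS : ∀ q ∈ S, σ q.1.1 ∈ W i := by
      intro q hq
      have : q.1.1 ∈ σ ⁻¹' W i := by
        rw [← hUcover]; exact Set.mem_iUnion.mpr ⟨(f p).2.2.1, hq.1⟩
      exact this
    have hco : ContinuousOn f S := by
      rw [continuousOn_iff_continuous_restrict]
      have hrf : S.domRestrict f = fun q : S =>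
          ⟨i, ⟨σ q.1.1.1, hwS q q.2⟩, (f p).2.2.1, (f p).2.2.2⟩ := by
        funext q
        exact hfval q.1 i (f p).2.2.1 (f p).2.2.2 q.2.1 q.2.2 (hwS q q.2)
      rw [hrf]
      exact continuous_sigmaMk.comp ((Continuous.subtype_mk
        (hcont.comp (continuous_fst.comp (continuous_subtype_val.comp continuous_subtype_val)))
        _).prodMk continuous_const)
    exact hco.continuousAt (hSo.mem_nhds hSp)
  refine ⟨⟨⟨f, g, hgf, hfg⟩, hfc, hgc⟩, ?_⟩
  intro p hp i j k h1 h2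
  have hw : σ p.1 ∈ W i := by
    have : p.1 ∈ σ ⁻¹' W i := by
      rw [← hUcover]; exact Set.mem_iUnion.mpr ⟨j, h1⟩
    exact this
  exact ⟨hw, hfval ⟨p, hp⟩ i j k h1 h2 hw⟩
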